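/- (Purification Bound, backpropagation preserves upper bounds) Let l be a branch and let v be a real-valued function on branches such that v(l_u) ≥ V*(l_u) for every child l_u ∈ Children(l, i) of every unused feature i. Then for every unused feature i, the estimate q(l, i) := −λ + ∑_{l_u ∈ Children(l, i)} v(l_u) satisfies q(l, i) ≥ Q*(l, i); and the updated estimate v(l) := max{ H(l), max over unused i of q(l, i) } satisfies v(l) ≥ V*(l). -/

import Mathlib

open Finset

/-- A branch: for each feature, either unused (`none`) or fixed to a category. -/
abbrev Branch (q : ℕ) (C : Fin q → ℕ) : Type := ∀ i : Fin q, Option (Fin (C i))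

/-- States: `Sum.inl l` is the (non-terminal) branch `l`, `Sum.inr l` is its terminal state `l̄`. -/
abbrev BState (q : ℕ) (C : Fin q → ℕ) : Type := Branch q C ⊕ Branch q C

/-- The root branch `Ω`. -/
def root (q : ℕ) (C : Fin q → ℕ) : Branch q C := fun _ => none

/-- The child of `l` obtained by fixing unused feature `i` to category `j`. -/
def child {q : ℕ} {C : Fin q → ℕ} (l : Branch q C) (i : Fin q) (j : Fin (C i)) : Branch q C :=
  Function.update l i (some j)

/-- `Children(l, i)`. -/
def childrenF {q : ℕ} {C : Fin q → ℕ} (l : Branch q C) (i : Fin q) : Finset (Branch q C) :=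
  Finset.univ.image (fun j : Fin (C i) => child l i j)

/-- A policy: `act l = none` is the terminal action `ā`, `act l = some i` splits on the
unused feature `i`. -/
structure Policy (q : ℕ) (C : Fin q → ℕ) where
  act : Branch q C → Option (Fin q)
  valid : ∀ l i, act l = some i → l i = none

/-- Transition set of the action taken by `π` at branch `l`. -/
def stepSet {q : ℕ} {C : Fin q → ℕ} (π : Policy q C) (l : Branch q C) : Finset (BState q C) :=
  match π.act l with
  | none => {Sum.inr l}
  | some i => (childrenF l i).image Sum.inl

/-- Trajectory of policy `π` from branch `l`. -/
def traj {q : ℕ} {C : Fin q → ℕ} (π : Policy q C) (l : Branch q C) : ℕ → Finset (BState q C)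
  | 0 => {Sum.inl l}
  | t + 1 => (traj π l t).biUnion
      (fun s => Sum.elim (fun lu => stepSet π lu) (fun lu => ({Sum.inr lu} : Finset (BState q C))) s)

/-- `τ_l^π`: minimal time `t ≥ 1` at which the trajectory consists of terminal states only. -/
noncomputable def tau {q : ℕ} {C : Fin q → ℕ} (π : Policy q C) (l : Branch q C) : ℕ :=
  sInf {t : ℕ | 1 ≤ t ∧ ∀ x ∈ traj π l t, x.isRight}

/-- A data point `x` is in branch `l`. -/
def inBranch {q : ℕ} {C : Fin q → ℕ} (l : Branch q C) (x : ∀ i : Fin q, Fin (C i)) : Prop :=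
  ∀ (i : Fin q) (c : Fin (C i)), l i = some c → x i = c

instance {q : ℕ} {C : Fin q → ℕ} (l : Branch q C) (x : ∀ i, Fin (C i)) :
    Decidable (inBranch l x) := by unfold inBranch; infer_instance

/-- `n(l)`: number of data points in `l`. -/
def nIn {q K : ℕ} {C : Fin q → ℕ} (D : Multiset ((∀ i : Fin q, Fin (C i)) × Fin K))
    (l : Branch q C) : ℕ :=
  (D.filter (fun p => inBranch l p.1)).card

/-- `n_k(l)`: number of data points in `l` of class `k`. -/
def nk {q K : ℕ} {C : Fin q → ℕ} (D : Multiset ((∀ i : Fin q, Fin (C i)) × Fin K))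
    (l : Branch q C) (k : Fin K) : ℕ :=
  (D.filter (fun p => inBranch l p.1 ∧ p.2 = k)).card

/-- `H(l) = (max_k n_k(l)) / n`. -/
noncomputable def Hb {q K : ℕ} {C : Fin q → ℕ} (D : Multiset ((∀ i : Fin q, Fin (C i)) × Fin K))
    (l : Branch q C) : ℝ :=
  ((Finset.univ.sup (fun k : Fin K => nk D l k) : ℕ) : ℝ) / (Multiset.card D : ℝ)

/-- Reward collected at a state of the trajectory: `H(l)` for the terminal action,
`-λ` for a split action, `0` at terminal states. -/
noncomputable def rew {q K : ℕ} {C : Fin q → ℕ}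
    (D : Multiset ((∀ i : Fin q, Fin (C i)) × Fin K)) (lam : ℝ) (π : Policy q C) :
    BState q C → ℝ
  | Sum.inl lu => match π.act lu with
      | none => Hb D lu
      | some _ => -lam
  | Sum.inr _ => 0

/-- Value `V^π(l)`. -/
noncomputable def V {q K : ℕ} {C : Fin q → ℕ}
    (D : Multiset ((∀ i : Fin q, Fin (C i)) × Fin K)) (lam : ℝ)
    (π : Policy q C) (l : Branch q C) : ℝ :=
  ∑ t ∈ Finset.range (tau π l), ∑ x ∈ traj π l t, rew D lam π x

/-- State-action value `Q^π(l, a)`. -/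
noncomputable def Qv {q K : ℕ} {C : Fin q → ℕ}
    (D : Multiset ((∀ i : Fin q, Fin (C i)) × Fin K)) (lam : ℝ)
    (π : Policy q C) (l : Branch q C) : Option (Fin q) → ℝ
  | none => Hb D l
  | some i => -lam + ∑ j : Fin (C i), V D lam π (child l i j)

/-- The available actions `A(l)`. -/
def Avail {q : ℕ} {C : Fin q → ℕ} (l : Branch q C) : Finset (Option (Fin q)) :=
  insert none ((Finset.univ.filter (fun i : Fin q => l i = none)).image some)

theorem Avail_nonempty {q : ℕ} {C : Fin q → ℕ} (l : Branch q C) : (Avail l).Nonempty :=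
  ⟨none, Finset.mem_insert_self _ _⟩

/-- The sub-DT of `π` rooted in `l`: the branches whose terminal states constitute
the trajectory at time `τ_l^π`. -/
noncomputable def subDTof {q : ℕ} {C : Fin q → ℕ} (π : Policy q C) (l : Branch q C) : Finset (Branch q C) :=
  (traj π l (tau π l)).image (Sum.elim id id)

/-- `SubDT l T m`: `T` is a sub-DT rooted in `l` obtained by `m` split operations. -/
inductive SubDT {q : ℕ} {C : Fin q → ℕ} : Branch q C → Finset (Branch q C) → ℕ → Prop
  | leaf (l : Branch q C) : SubDT l {l} 0
  | split (l : Branch q C) (T : Finset (Branch q C)) (m : ℕ) (l' : Branch q C) (i : Fin q)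
      (hT : SubDT l T m) (hmem : l' ∈ T) (hnone : l' i = none) :
      SubDT l (T.erase l' ∪ childrenF l' i) (m + 1)

/-- `H(T) = ∑_{l ∈ T} H(l)`. -/
noncomputable def HT {q K : ℕ} {C : Fin q → ℕ}
    (D : Multiset ((∀ i : Fin q, Fin (C i)) × Fin K)) (T : Finset (Branch q C)) : ℝ :=
  ∑ l ∈ T, Hb D l

/-- `splits(l)`: number of features used by branch `l`. -/
def nsplits {q : ℕ} {C : Fin q → ℕ} (l : Branch q C) : ℕ :=
  (Finset.univ.filter (fun i : Fin q => l i ≠ none)).card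

section Aux

variable {q K : ℕ} {C : Fin q → ℕ}

lemma child_apply_self (l : Branch q C) (i : Fin q) (j : Fin (C i)) :
    child l i j i = some j := by
  simp [child]

lemma child_apply_ne (l : Branch q C) (i : Fin q) (j : Fin (C i)) {i' : Fin q} (h : i' ≠ i) :
    child l i j i' = l i' := by
  simp [child, Function.update_of_ne h]

lemma mem_traj_feature (π : Policy q C) {lu : Branch q C} {i : Fin q} {j : Fin (C i)}
    (h : lu i = some j) : ∀ t, ∀ x ∈ traj π lu t, Sum.elim id id x i = some j := by
  intro t
  induction t with
  | zero => intro x hx; simp [traj] at hx; subst hx; simpa using h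
  | succ t ih =>
    intro x hx
    simp only [traj, Finset.mem_biUnion] at hx
    obtain ⟨y, hy, hxy⟩ := hx
    cases y with
    | inr l' =>
      simp at hxy; subst hxy
      simpa using ih _ hy
    | inl l' =>
      have hl' : l' i = some j := ih _ hy
      simp only [Sum.elim_inl, stepSet] at hxy
      cases hact : π.act l' with
      | none =>
        rw [hact] at hxy; simp at hxy; subst hxy; simpa using hl'
      | some i' =>
        rw [hact] at hxy
        simp only [Finset.mem_image, childrenF, Finset.mem_univ, true_and] at hxy
        obtain ⟨lc, ⟨j', hj'⟩, hx⟩ := hxy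
        subst hx
        have hne : i' ≠ i := by
          intro hEq; subst hEq
          rw [π.valid l' i' hact] at hl'; exact absurd hl' (by simp)
        subst hj'
        simpa [child_apply_ne _ _ _ (Ne.symm hne)] using hl'

lemma nsplits_child {l : Branch q C} {i : Fin q} (h : l i = none) (j : Fin (C i)) :
    nsplits (child l i j) = nsplits l + 1 := by
  unfold nsplits
  have : (Finset.univ.filter (fun i' : Fin q => child l i j i' ≠ none)) =
      insert i (Finset.univ.filter (fun i' : Fin q => l i' ≠ none)) := by
    ext i'
    by_cases hii : i' = i
    · subst hii; simp [child_apply_self]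
    · simp [child_apply_ne _ _ _ hii, hii]
  rw [this, Finset.card_insert_of_notMem (by simp [h])]

lemma nsplits_le (l : Branch q C) : nsplits l ≤ q := by
  simpa [nsplits] using Finset.card_filter_le (Finset.univ : Finset (Fin q)) _

lemma nsplits_traj (π : Policy q C) (l : Branch q C) :
    ∀ t, ∀ l', Sum.inl l' ∈ traj π l t → nsplits l + t ≤ nsplits l' := by
  intro t
  induction t with
  | zero => intro l' h; simp [traj] at h; subst h; simp
  | succ t ih =>
    intro l' h
    simp only [traj, Finset.mem_biUnion] at h
    obtain ⟨y, hy, hxy⟩ := h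
    cases y with
    | inr l'' => simp at hxy
    | inl l'' =>
      have hl'' := ih _ hy
      simp only [Sum.elim_inl, stepSet] at hxy
      cases hact : π.act l'' with
      | none => rw [hact] at hxy; simp at hxy
      | some i =>
        rw [hact] at hxy
        simp only [Finset.mem_image, childrenF, Finset.mem_univ, true_and] at hxy
        obtain ⟨lc, ⟨j, hj⟩, hx⟩ := hxy
        cases hx; subst hj
        rw [nsplits_child (π.valid l'' i hact)]
        omega

lemma traj_allRight (π : Policy q C) (l : Branch q C) :
    ∀ x ∈ traj π l (q + 1), x.isRight := by
  intro x hx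
  cases x with
  | inr l' => rfl
  | inl l' =>
    have := nsplits_traj π l (q + 1) l' hx
    have := nsplits_le l'
    omega

lemma tau_mem (π : Policy q C) (l : Branch q C) :
    1 ≤ tau π l ∧ ∀ x ∈ traj π l (tau π l), x.isRight := by
  have h : (q + 1) ∈ {t : ℕ | 1 ≤ t ∧ ∀ x ∈ traj π l t, x.isRight} :=
    ⟨by omega, traj_allRight π l⟩
  exact Nat.sInf_mem ⟨_, h⟩

lemma tau_le (π : Policy q C) (l : Branch q C) : tau π l ≤ q + 1 := by
  have h : (q + 1) ∈ {t : ℕ | 1 ≤ t ∧ ∀ x ∈ traj π l t, x.isRight} :=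
    ⟨by omega, traj_allRight π l⟩
  exact Nat.sInf_le h

lemma traj_stab (π : Policy q C) (l : Branch q C) {t : ℕ}
    (h : ∀ x ∈ traj π l t, x.isRight) : traj π l (t + 1) = traj π l t := by
  ext x
  simp only [traj, Finset.mem_biUnion]
  constructor
  · rintro ⟨y, hy, hxy⟩
    cases y with
    | inl l' => exact absurd (h _ hy) (by simp)
    | inr l' => simp at hxy; subst hxy; exact hy
  · intro hx
    refine ⟨x, hx, ?_⟩
    cases x with
    | inl l' => exact absurd (h _ hx) (by simp)
    | inr l' => simp

lemma traj_allRight_of_ge (π : Policy q C) (l : Branch q C) {t : ℕ} (ht : tau π l ≤ t) :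
    ∀ x ∈ traj π l t, x.isRight := by
  induction t with
  | zero =>
    have := (tau_mem π l).1; omega
  | succ t ih =>
    rcases Nat.lt_or_ge (tau π l) (t + 1) with h | h
    · have h' : tau π l ≤ t := by omega
      rw [traj_stab π l (ih h')]; exact ih h'
    · have : tau π l = t + 1 := by omega
      rw [← this]; exact (tau_mem π l).2

lemma V_eq_Vn (D : Multiset ((∀ i : Fin q, Fin (C i)) × Fin K)) (lam : ℝ)
    (π : Policy q C) (l : Branch q C) {N : ℕ} (hN : tau π l ≤ N) :
    V D lam π l = ∑ t ∈ Finset.range N, ∑ x ∈ traj π l t, rew D lam π x := by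
  induction N, hN using Nat.le_induction with
  | base => rfl
  | succ N hN ih =>
    rw [Finset.sum_range_succ, ← ih]
    have : ∑ x ∈ traj π l N, rew D lam π x = 0 := by
      apply Finset.sum_eq_zero
      intro x hx
      have := traj_allRight_of_ge π l hN x hx
      cases x with
      | inl _ => simp at this
      | inr _ => rfl
    rw [this, add_zero]

lemma traj_succ_children (π : Policy q C) {l : Branch q C} {i : Fin q}
    (h : π.act l = some i) (t : ℕ) :
    traj π l (t + 1) = (childrenF l i).biUnion (fun lu => traj π lu t) := by
  induction t with
  | zero =>
    ext x
    simp only [traj, Finset.mem_biUnion, Finset.mem_singleton]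
    constructor
    · rintro ⟨y, hy, hxy⟩
      subst hy
      simp only [Sum.elim_inl, stepSet, h] at hxy
      simp only [Finset.mem_image] at hxy
      obtain ⟨lu, hlu, hx⟩ := hxy
      exact ⟨lu, hlu, by simp [← hx]⟩
    · rintro ⟨lu, hlu, hx⟩
      refine ⟨Sum.inl l, rfl, ?_⟩
      have hss : stepSet π l = (childrenF l i).image Sum.inl := by
        unfold stepSet; rw [h]
      simp only [Sum.elim_inl, hss, Finset.mem_image]
      exact ⟨lu, hlu, hx.symm⟩
  | succ t ih =>
    show (traj π l (t+1)).biUnion _ = _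
    rw [ih, Finset.biUnion_biUnion]
    rfl

lemma child_inj {l : Branch q C} {i : Fin q} :
    Function.Injective (child l i) := by
  intro j j' h
  have := congrArg (fun f => f i) h
  simpa [child_apply_self] using this

lemma traj_disjoint (π : Policy q C) (l : Branch q C) (i : Fin q) {j j' : Fin (C i)}
    (hjj : j ≠ j') (t : ℕ) :
    Disjoint (traj π (child l i j) t) (traj π (child l i j') t) := by
  rw [Finset.disjoint_left]
  intro x hx hx'
  have h1 := mem_traj_feature π (child_apply_self l i j) t x hx
  have h2 := mem_traj_feature π (child_apply_self l i j') t x hx'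
  rw [h1] at h2
  exact hjj (by simpa using h2)

/-- Bellman equation: `V^π(l) = Q^π(l, π(l))`. -/
lemma bellman (D : Multiset ((∀ i : Fin q, Fin (C i)) × Fin K)) (lam : ℝ)
    (π : Policy q C) (l : Branch q C) :
    V D lam π l = Qv D lam π l (π.act l) := by
  cases hact : π.act l with
  | none =>
    have h1 : ∀ x ∈ traj π l 1, Sum.isRight x := by
      intro x hx
      simp only [traj, Finset.mem_biUnion, Finset.mem_singleton] at hx
      obtain ⟨y, hy, hxy⟩ := hx
      subst hy
      simp only [Sum.elim_inl, stepSet, hact, Finset.mem_singleton] at hxy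
      subst hxy; rfl
    have htau : tau π l = 1 :=
      le_antisymm (Nat.sInf_le ⟨le_refl 1, h1⟩) (tau_mem π l).1
    rw [V, htau]
    simp [traj, rew, hact, Qv]
  | some i =>
    have hNl : tau π l ≤ (q + 1) + 1 := (tau_le π l).trans (by omega)
    rw [V_eq_Vn D lam π l hNl, Finset.sum_range_succ']
    have hS0 : ∑ x ∈ traj π l 0, rew D lam π x = -lam := by
      simp [traj, rew, hact]
    have hstep : ∀ t, ∑ x ∈ traj π l (t + 1), rew D lam π x =
        ∑ j : Fin (C i), ∑ x ∈ traj π (child l i j) t, rew D lam π x := by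
      intro t
      rw [traj_succ_children π hact t]
      rw [Finset.sum_biUnion]
      · rw [childrenF, Finset.sum_image (fun a _ b _ h => child_inj h)]
      · intro a ha b hb hab
        simp only [childrenF, Finset.coe_image, Set.mem_image] at ha hb
        obtain ⟨j, -, rfl⟩ := ha
        obtain ⟨j', -, rfl⟩ := hb
        exact traj_disjoint π l i (fun h => hab (by rw [h])) t
    simp only [hstep, hS0]
    rw [Finset.sum_comm, add_comm]
    simp only [Qv]
    congr 1
    refine Finset.sum_congr rfl (fun j _ => ?_)
    exact (V_eq_Vn D lam π (child l i j) (tau_le π _)).symm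

end Aux

/-- **Purification Bound, backpropagation.** If `v` upper-bounds the
optimal values `V*` on all children of `l`, then each estimate
`q(l,i) = -λ + ∑_{l_u ∈ Children(l,i)} v(l_u)` upper-bounds `Q*(l,i)`, and the updated
estimate `v(l) = max { H(l), max_i q(l,i) }` upper-bounds `V*(l)`. -/
theorem purification_bound_backprop {q K : ℕ} (hq : 2 ≤ q) (hK : 2 ≤ K)
    {C : Fin q → ℕ} (hC : ∀ i, 2 ≤ C i)
    (D : Multiset ((∀ i : Fin q, Fin (C i)) × Fin K)) (hD : D ≠ 0)
    (lam : ℝ) (hlam0 : 0 < lam) (hlam1 : lam < 1)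
    (πs : Policy q C)
    (hopt : ∀ π : Policy q C, V D lam π (root q C) ≤ V D lam πs (root q C))
    (l : Branch q C) (v : Branch q C → ℝ)
    (hv : ∀ (i : Fin q), l i = none → ∀ j : Fin (C i),
        V D lam πs (child l i j) ≤ v (child l i j)) :
    (∀ i : Fin q, l i = none →
        Qv D lam πs l (some i) ≤ -lam + ∑ j : Fin (C i), v (child l i j)) ∧
    V D lam πs l ≤
      (insert (Hb D l)
          ((Finset.univ.filter (fun i : Fin q => l i = none)).image
            (fun i => -lam + ∑ j : Fin (C i), v (child l i j)))).max'
        (Finset.insert_nonempty _ _) := by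
  have hQ : ∀ i : Fin q, l i = none →
      Qv D lam πs l (some i) ≤ -lam + ∑ j : Fin (C i), v (child l i j) := by
    intro i hi
    simp only [Qv]
    gcongr with j
    exact hv i hi j
  refine ⟨hQ, ?_⟩
  cases hact : πs.act l with
  | none =>
    rw [bellman D lam πs l, hact]
    exact Finset.le_max' _ _ (Finset.mem_insert_self _ _)
  | some i =>
    have hi := πs.valid l i hact
    rw [bellman D lam πs l, hact]
    refine (hQ i hi).trans (Finset.le_max' _ _ ?_)
    refine Finset.mem_insert_of_mem (Finset.mem_image.2 ⟨i, ?_, rfl⟩)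
    simp [hi]
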